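/- With h = max{j : α_j ≤ δ}: Σ_{j=h+1}^n Λ_j = Σ_{j=h+1}^n α_j ( f(V \ V_{j−1}) − f(V \ V_j) ) − δ ( f(V \ V_h) − f(∅) ), where Λ_j is as defined from the piecewise-constant integral over (δ, α_j]. -/

import Mathlib

private lemma tel_aux (g : ℕ → ℝ) (h : ℕ) : ∀ n, h ≤ n →
    ∑ j ∈ Finset.Icc (h + 1) n, (g j - g (j - 1)) = g n - g h := by
  intro n
  induction n with
  | zero =>
    intro hn
    interval_cases h
    simp
  | succ n ih =>
    intro hn
    rcases Nat.lt_or_ge h (n + 1) with hlt | hge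
    · have hn' : h ≤ n := Nat.lt_succ_iff.mp hlt
      rw [Finset.sum_Icc_succ_top (by omega), ih hn']
      simp
    · have : h = n + 1 := le_antisymm hn hge
      subst this
      rw [Finset.Icc_eq_empty (by omega)]
      simp

private lemma abel_aux (a F : ℕ → ℝ) (h : ℕ) : ∀ n, h + 1 ≤ n →
    ∑ j ∈ Finset.Icc (h + 1) n, a j * (F (j - 1) - F j)
      = a (h + 1) * F h - a n * F n
        + ∑ j ∈ Finset.Icc (h + 2) n, (a j - a (j - 1)) * F (j - 1) := by
  intro n
  induction n with
  | zero => omega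
  | succ n ih =>
    intro hn
    rcases Nat.lt_or_ge (h + 1) (n + 1) with hlt | hge
    · have hn' : h + 1 ≤ n := by omega
      rw [Finset.sum_Icc_succ_top (by omega), Finset.sum_Icc_succ_top (by omega : h + 2 ≤ n + 1),
        ih hn']
      simp only [Nat.add_sub_cancel]
      ring
    · have : n = h := by omega
      subst this
      rw [Finset.Icc_self, Finset.Icc_eq_empty (by omega)]
      simp
      ring

/-- Summing the `Λ_j` formulas telescopes:
`Σ_{j=h+1}^n Λ_j = Σ_{j=h+1}^n α_j (f(V \ V_{j−1}) − f(V \ V_j)) − δ (f(V \ V_h) − f(∅))`,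
where `Λ_j = (α_{h+1} − δ)(f(V_{h+1,j}) − f(V_{h+1,j−1}))
 + Σ_{j'=h+2}^n (α_{j'} − α_{j'−1})(f(V_{j',j}) − f(V_{j',j−1}))` and
`h` is the largest index with `α_h ≤ δ`. Vertices are `0`-indexed: the paper's
`v_j` is `⟨j-1, _⟩ : Fin n`, so `V_{j',j} = {v | j' - 1 ≤ v.val ∧ v.val < j}`
and `V \ V_j = {v | j ≤ v.val}`. -/
theorem sum_Lambda_telescopes {n : ℕ} (f : Set (Fin n) → ℝ)
    (α : ℕ → ℝ) (hα0 : α 0 = 0) (hα1 : α n ≤ 1)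
    (hsorted : ∀ a b : ℕ, a ≤ b → b ≤ n → α a ≤ α b)
    (δ : ℝ) (hδ : δ ∈ Set.Icc (0:ℝ) 1)
    (h : ℕ) (hhn : h ≤ n) (hhle : α h ≤ δ) (hhmax : h < n → δ < α (h + 1)) :
    ∑ j ∈ Finset.Icc (h + 1) n,
        ((α (h + 1) - δ) *
            (f {v : Fin n | h ≤ v.val ∧ v.val < j}
              - f {v : Fin n | h ≤ v.val ∧ v.val < j - 1})
          + ∑ j' ∈ Finset.Icc (h + 2) n, (α j' - α (j' - 1)) *
              (f {v : Fin n | j' - 1 ≤ v.val ∧ v.val < j}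
                - f {v : Fin n | j' - 1 ≤ v.val ∧ v.val < j - 1})) =
      (∑ j ∈ Finset.Icc (h + 1) n, α j *
          (f {v : Fin n | j - 1 ≤ v.val} - f {v : Fin n | j ≤ v.val}))
        - δ * (f {v : Fin n | h ≤ v.val} - f (∅ : Set (Fin n))) := by
  have hFn : {v : Fin n | n ≤ v.val} = (∅ : Set (Fin n)) := by
    ext v; simp
  have hempty : ∀ k : ℕ, h ≤ k →
      {v : Fin n | k ≤ v.val ∧ v.val < h} = (∅ : Set (Fin n)) := by
    intro k hk; ext v; simp; omega
  have htop : ∀ k : ℕ,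
      {v : Fin n | k ≤ v.val ∧ v.val < n} = {v : Fin n | k ≤ v.val} := by
    intro k; ext v; simp [v.isLt]
  rcases eq_or_lt_of_le hhn with heq | hlt
  · subst heq
    rw [Finset.Icc_eq_empty (by omega), Finset.Icc_eq_empty (by omega), hFn]
    simp
  -- h < n
  rw [Finset.sum_add_distrib, ← Finset.mul_sum,
    tel_aux (fun j => f {v : Fin n | h ≤ v.val ∧ v.val < j}) h n hhn,
    Finset.sum_comm]
  have key : ∀ j' ∈ Finset.Icc (h + 2) n,
      (∑ j ∈ Finset.Icc (h + 1) n, (α j' - α (j' - 1)) *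
          (f {v : Fin n | j' - 1 ≤ v.val ∧ v.val < j}
            - f {v : Fin n | j' - 1 ≤ v.val ∧ v.val < j - 1}))
        = (α j' - α (j' - 1)) * (f {v : Fin n | j' - 1 ≤ v.val} - f (∅ : Set (Fin n))) := by
    intro j' hj'
    simp only [Finset.mem_Icc] at hj'
    rw [← Finset.mul_sum,
      tel_aux (fun j => f {v : Fin n | j' - 1 ≤ v.val ∧ v.val < j}) h n hhn]
    rw [htop, hempty (j' - 1) (by omega)]
  have hc := tel_aux α (h + 1) n hlt
  rw [show h + 1 + 1 = h + 2 from rfl] at hc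
  have hsum : ∑ j' ∈ Finset.Icc (h + 2) n, (α j' - α (j' - 1)) *
        (f {v : Fin n | j' - 1 ≤ v.val} - f (∅ : Set (Fin n)))
      = (∑ j' ∈ Finset.Icc (h + 2) n, (α j' - α (j' - 1)) * f {v : Fin n | j' - 1 ≤ v.val})
        - (α n - α (h + 1)) * f (∅ : Set (Fin n)) := by
    rw [← hc, Finset.sum_mul, ← Finset.sum_sub_distrib]
    exact Finset.sum_congr rfl fun j' _ => by ring
  rw [Finset.sum_congr rfl key,
    abel_aux α (fun j => f {v : Fin n | j ≤ v.val}) h n hlt, hsum]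
  rw [htop, hempty h le_rfl, hFn]
  ring
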